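/- Let O be a 2S×2S real orthogonal matrix, let 1 ≤ i ≤ S, and let j₁,...,j_{S−1} be any S−1 row indices in {1,...,2S}. Then there exists a 2S×2S real orthogonal symplectic matrix W such that the entries of columns 2i−1 and 2i of OW vanish in all of the rows j₁,...,j_{S−1}; that is, (OW)_{j_m,2i−1} = 0 and (OW)_{j_m,2i} = 0 for all m = 1,...,S−1. -/

import Mathlib

set_option maxHeartbeats 1000000

open Matrix

/-- The standard symplectic form `Ω` on `2S` phase-space coordinates ordered
`(q₁,p₁,…,q_S,p_S)`: the direct sum of `S` copies of `[[0,1],[-1,0]]`. -/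
def Omega (S : ℕ) : Matrix (Fin (2 * S)) (Fin (2 * S)) ℝ :=
  Matrix.of fun i j =>
    if i.val + 1 = j.val ∧ i.val % 2 = 0 then (1 : ℝ)
    else if j.val + 1 = i.val ∧ j.val % 2 = 0 then -1 else 0

/-- A `2S × 2S` real matrix is orthogonal symplectic if `WᵀW = 1` and `WᵀΩW = Ω`. -/
def IsOrthoSymp (S : ℕ) (W : Matrix (Fin (2 * S)) (Fin (2 * S)) ℝ) : Prop :=
  Wᵀ * W = 1 ∧ Wᵀ * Omega S * W = Omega S

/-- The equivalence `Fin S × Fin 2 ≃ Fin (2*S)`, `(a,t) ↦ 2a+t`. -/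
def pairEquiv (S : ℕ) : Fin S × Fin 2 ≃ Fin (2 * S) where
  toFun p := ⟨2 * p.1.val + p.2.val, by have := p.1.isLt; have := p.2.isLt; omega⟩
  invFun r := (⟨r.val / 2, by have := r.isLt; omega⟩, ⟨r.val % 2, by omega⟩)
  left_inv p := by
    have := p.2.isLt
    ext <;> simp <;> omega
  right_inv r := by
    ext; simp; omega

lemma sum_two_mul {M : Type*} [AddCommMonoid M] (S : ℕ) (f : Fin (2 * S) → M) :
    ∑ r, f r = ∑ a : Fin S,
      (f ⟨2 * a.val, by have := a.isLt; linarith⟩ + f ⟨2 * a.val + 1, by have := a.isLt; linarith⟩) := by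
  rw [← Equiv.sum_comp (pairEquiv S) f, Fintype.sum_prod_type]
  refine Finset.sum_congr rfl fun a _ => ?_
  rw [Fin.sum_univ_two]
  rfl

/-- Realification of a complex matrix into `2×2` blocks `[[re, -im],[im, re]]`. -/
def realify (S : ℕ) (u : Matrix (Fin S) (Fin S) ℂ) : Matrix (Fin (2 * S)) (Fin (2 * S)) ℝ :=
  Matrix.of fun r c =>
    let z := u ⟨r.val / 2, by have := r.isLt; omega⟩ ⟨c.val / 2, by have := c.isLt; omega⟩
    if r.val % 2 = 0 then (if c.val % 2 = 0 then z.re else -z.im)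
    else (if c.val % 2 = 0 then z.im else z.re)

lemma realify_ee (S : ℕ) (u : Matrix (Fin S) (Fin S) ℂ) (a k : Fin S)
    (ha : 2 * a.val < 2 * S) (hk : 2 * k.val < 2 * S) :
    realify S u ⟨2 * a.val, ha⟩ ⟨2 * k.val, hk⟩ = (u a k).re := by
  have h1 : (⟨2 * a.val / 2, by omega⟩ : Fin S) = a := by apply Fin.ext; simp <;> omega
  have h2 : (⟨2 * k.val / 2, by omega⟩ : Fin S) = k := by apply Fin.ext; simp <;> omega
  simp only [realify, Matrix.of_apply]
  rw [if_pos (by omega), if_pos (by omega), h1, h2]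

lemma realify_eo (S : ℕ) (u : Matrix (Fin S) (Fin S) ℂ) (a k : Fin S)
    (ha : 2 * a.val < 2 * S) (hk : 2 * k.val + 1 < 2 * S) :
    realify S u ⟨2 * a.val, ha⟩ ⟨2 * k.val + 1, hk⟩ = -(u a k).im := by
  have h1 : (⟨2 * a.val / 2, by omega⟩ : Fin S) = a := by apply Fin.ext; simp <;> omega
  have h2 : (⟨(2 * k.val + 1) / 2, by omega⟩ : Fin S) = k := by apply Fin.ext; simp <;> omega
  simp only [realify, Matrix.of_apply]
  rw [if_pos (by omega), if_neg (by omega), h1, h2]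

lemma realify_oe (S : ℕ) (u : Matrix (Fin S) (Fin S) ℂ) (a k : Fin S)
    (ha : 2 * a.val + 1 < 2 * S) (hk : 2 * k.val < 2 * S) :
    realify S u ⟨2 * a.val + 1, ha⟩ ⟨2 * k.val, hk⟩ = (u a k).im := by
  have h1 : (⟨(2 * a.val + 1) / 2, by omega⟩ : Fin S) = a := by apply Fin.ext; simp <;> omega
  have h2 : (⟨2 * k.val / 2, by omega⟩ : Fin S) = k := by apply Fin.ext; simp <;> omega
  simp only [realify, Matrix.of_apply]
  rw [if_neg (by omega), if_pos (by omega), h1, h2]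

lemma realify_oo (S : ℕ) (u : Matrix (Fin S) (Fin S) ℂ) (a k : Fin S)
    (ha : 2 * a.val + 1 < 2 * S) (hk : 2 * k.val + 1 < 2 * S) :
    realify S u ⟨2 * a.val + 1, ha⟩ ⟨2 * k.val + 1, hk⟩ = (u a k).re := by
  have h1 : (⟨(2 * a.val + 1) / 2, by omega⟩ : Fin S) = a := by apply Fin.ext; simp <;> omega
  have h2 : (⟨(2 * k.val + 1) / 2, by omega⟩ : Fin S) = k := by apply Fin.ext; simp <;> omega
  simp only [realify, Matrix.of_apply]
  rw [if_neg (by omega), if_neg (by omega), h1, h2]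

lemma Omega_ee (S : ℕ) (a b : Fin S) (ha : 2 * a.val < 2 * S) (hb : 2 * b.val < 2 * S) :
    Omega S ⟨2 * a.val, ha⟩ ⟨2 * b.val, hb⟩ = 0 := by
  simp only [Omega, Matrix.of_apply]
  rw [if_neg (by omega), if_neg (by omega)]

lemma Omega_eo (S : ℕ) (a b : Fin S) (ha : 2 * a.val < 2 * S) (hb : 2 * b.val + 1 < 2 * S) :
    Omega S ⟨2 * a.val, ha⟩ ⟨2 * b.val + 1, hb⟩ = if a = b then 1 else 0 := by
  simp only [Omega, Matrix.of_apply]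
  rcases eq_or_ne a b with h | h
  · subst h; rw [if_pos ⟨by omega, by omega⟩, if_pos rfl]
  · have : a.val ≠ b.val := fun hc => h (by ext; omega)
    rw [if_neg (by omega), if_neg (by omega), if_neg h]

lemma Omega_oe (S : ℕ) (a b : Fin S) (ha : 2 * a.val + 1 < 2 * S) (hb : 2 * b.val < 2 * S) :
    Omega S ⟨2 * a.val + 1, ha⟩ ⟨2 * b.val, hb⟩ = if a = b then -1 else 0 := by
  simp only [Omega, Matrix.of_apply]
  rcases eq_or_ne a b with h | h
  · subst h; rw [if_neg (by omega), if_pos ⟨by omega, by omega⟩, if_pos rfl]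
  · have : a.val ≠ b.val := fun hc => h (by ext; omega)
    rw [if_neg (by omega), if_neg (by omega), if_neg h]

lemma Omega_oo (S : ℕ) (a b : Fin S) (ha : 2 * a.val + 1 < 2 * S) (hb : 2 * b.val + 1 < 2 * S) :
    Omega S ⟨2 * a.val + 1, ha⟩ ⟨2 * b.val + 1, hb⟩ = 0 := by
  simp only [Omega, Matrix.of_apply]
  rw [if_neg (by omega), if_neg (by omega)]

lemma even_lt {S : ℕ} (k : Fin S) : 2 * k.val < 2 * S := by have := k.isLt; omega

lemma odd_lt {S : ℕ} (k : Fin S) : 2 * k.val + 1 < 2 * S := by have := k.isLt; omega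

/-- Decompose an index of `Fin (2*S)` into an even part. -/
lemma exists_even_part {S : ℕ} (c : Fin (2 * S)) (hc : c.val % 2 = 0) :
    ∃ k : Fin S, c = ⟨2 * k.val, even_lt k⟩ :=
  ⟨⟨c.val / 2, by have := c.isLt; omega⟩, by apply Fin.ext; simp <;> omega⟩

lemma exists_odd_part {S : ℕ} (c : Fin (2 * S)) (hc : c.val % 2 = 1) :
    ∃ k : Fin S, c = ⟨2 * k.val + 1, odd_lt k⟩ :=
  ⟨⟨c.val / 2, by have := c.isLt; omega⟩, by apply Fin.ext; simp <;> omega⟩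

/-- For any `2S × 2S` real orthogonal `O`, any mode `i`, and any
`S - 1` (distinct) row indices `j₁,…,j_{S-1}`, there is an orthogonal symplectic `W`
such that columns `2i-1` and `2i` of `O * W` vanish in all of those rows.
(Indices are `0`-based: the mode-`i` columns are `2i` and `2i+1`.) -/
theorem exists_ortho_symp_cols_vanish_rows (S : ℕ)
    (O : Matrix (Fin (2 * S)) (Fin (2 * S)) ℝ) (hO : Oᵀ * O = 1)
    (i : Fin S) (j : Fin (S - 1) → Fin (2 * S)) (hj : Function.Injective j) :
    ∃ W : Matrix (Fin (2 * S)) (Fin (2 * S)) ℝ,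
      IsOrthoSymp S W ∧
      ∀ m : Fin (S - 1),
        (O * W) (j m) ⟨2 * i.val, by have := i.isLt; omega⟩ = 0 ∧
        (O * W) (j m) ⟨2 * i.val + 1, by have := i.isLt; omega⟩ = 0 := by
  classical
  have hS : 0 < S := i.pos
  -- complex vectors built from the rows `j m` of `O`
  set cv : Fin (S - 1) → EuclideanSpace ℂ (Fin S) := fun m =>
    WithLp.toLp 2 (fun a : Fin S => (O (j m) ⟨2 * a.val, by have := a.isLt; omega⟩ : ℂ) +
      (O (j m) ⟨2 * a.val + 1, by have := a.isLt; omega⟩ : ℂ) * Complex.I) with hcv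
  have hcard : (Set.range cv).toFinset.card < Module.finrank ℂ (EuclideanSpace ℂ (Fin S)) := by
    rw [finrank_euclideanSpace_fin]
    calc (Set.range cv).toFinset.card ≤ Fintype.card (Fin (S - 1)) := by
          rw [Set.toFinset_range]
          exact Finset.card_image_le.trans (le_of_eq Finset.card_univ)
      _ < S := by simp; omega
  have hK : Submodule.span ℂ (Set.range cv) ≠ ⊤ := (span_lt_top_of_card_lt_finrank hcard).ne
  have hbot : (Submodule.span ℂ (Set.range cv))ᗮ ≠ ⊥ := by
    rw [Ne, Submodule.orthogonal_eq_bot_iff]; exact hK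
  obtain ⟨v₀, hv₀K, hv₀⟩ := Submodule.exists_mem_ne_zero_of_ne_bot hbot
  set v : EuclideanSpace ℂ (Fin S) := ((‖v₀‖⁻¹ : ℝ) : ℂ) • v₀ with hvdef
  have hvnorm : ‖v‖ = 1 := by
    rw [hvdef, norm_smul]
    simp [norm_ne_zero_iff.mpr hv₀]
  have hvK : v ∈ (Submodule.span ℂ (Set.range cv))ᗮ := Submodule.smul_mem _ _ hv₀K
  have hvorth : ∀ m, (inner ℂ (cv m) v : ℂ) = 0 := fun m =>
    (Submodule.mem_orthogonal _ v).mp hvK (cv m) (Submodule.subset_span (Set.mem_range_self m))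
  -- extend `v` to an orthonormal basis with `b i = v`
  have hON : Orthonormal ℂ (({i} : Set (Fin S)).restrict fun _ : Fin S => v) := by
    rw [orthonormal_iff_ite]
    intro x y
    have hxy : x = y :=
      Subtype.ext ((Set.mem_singleton_iff.mp x.2).trans (Set.mem_singleton_iff.mp y.2).symm)
    rw [if_pos hxy]
    show (inner ℂ v v : ℂ) = 1
    rw [inner_self_eq_norm_sq_to_K, hvnorm]; norm_num
  obtain ⟨b, hb⟩ := hON.exists_orthonormalBasis_extension_of_card_eq
    (by simp [finrank_euclideanSpace_fin])
  have hbi : b i = v := hb i rfl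
  -- unitarity of the matrix with columns `b k`
  have hUnit : ∀ k l : Fin S, ∑ a : Fin S, (starRingEnd ℂ) (b k a) * b l a
      = if k = l then 1 else 0 := by
    intro k l
    have h := orthonormal_iff_ite.mp b.orthonormal k l
    rw [PiLp.inner_apply] at h
    simpa [RCLike.inner_apply, mul_comm] using h
  have hRe : ∀ k l : Fin S, (∑ a : Fin S, ((b k a).re * (b l a).re + (b k a).im * (b l a).im))
      = if k = l then (1 : ℝ) else 0 := by
    intro k l
    have h := congrArg Complex.re (hUnit k l)
    rw [Complex.re_sum] at h
    have h2 : ∀ a : Fin S, ((starRingEnd ℂ) (b k a) * b l a).re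
        = (b k a).re * (b l a).re + (b k a).im * (b l a).im := by
      intro a; simp [Complex.mul_re]; try ring
    rw [Finset.sum_congr rfl (fun a _ => h2 a)] at h
    rw [h]
    split <;> simp
  have hIm : ∀ k l : Fin S, (∑ a : Fin S, ((b k a).re * (b l a).im - (b k a).im * (b l a).re))
      = 0 := by
    intro k l
    have h := congrArg Complex.im (hUnit k l)
    rw [Complex.im_sum] at h
    have h2 : ∀ a : Fin S, ((starRingEnd ℂ) (b k a) * b l a).im
        = (b k a).re * (b l a).im - (b k a).im * (b l a).re := by
      intro a; simp [Complex.mul_im]; try ring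
    rw [Finset.sum_congr rfl (fun a _ => h2 a)] at h
    rw [h]
    split <;> simp
  -- the orthogonal symplectic matrix
  set U : Matrix (Fin S) (Fin S) ℂ := Matrix.of (fun a k => b k a) with hU
  set W : Matrix (Fin (2 * S)) (Fin (2 * S)) ℝ := realify S U with hW
  have hUapp : ∀ a k : Fin S, U a k = b k a := fun a k => rfl
  -- orthogonality of W
  have hWO : Wᵀ * W = 1 := by
    ext c d
    rw [Matrix.mul_apply]
    simp only [Matrix.transpose_apply]
    rw [sum_two_mul S (fun r => W r c * W r d), Matrix.one_apply]
    rcases Nat.mod_two_eq_zero_or_one c.val with hc | hc <;>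
      rcases Nat.mod_two_eq_zero_or_one d.val with hd | hd
    · obtain ⟨k, rfl⟩ := exists_even_part c hc
      obtain ⟨l, rfl⟩ := exists_even_part d hd
      simp only [hW, realify_ee, realify_oe]
      rw [if_congr (show ((⟨2 * k.val, by have := k.isLt; omega⟩ : Fin (2 * S))
          = ⟨2 * l.val, by have := l.isLt; omega⟩) ↔ k = l by
          simp only [Fin.ext_iff, Fin.val_mk]; omega) rfl rfl]
      simp only [hUapp]
      exact hRe k l
    · obtain ⟨k, rfl⟩ := exists_even_part c hc
      obtain ⟨l, rfl⟩ := exists_odd_part d hd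
      rw [if_neg (by simp only [Fin.ext_iff, Fin.val_mk]; omega)]
      simp only [hW, realify_ee, realify_eo, realify_oe, realify_oo, hUapp]
      have h2 : (∑ a : Fin S, ((b k a).re * -(b l a).im + (b k a).im * (b l a).re))
          = ∑ a : Fin S, (0 - ((b k a).re * (b l a).im - (b k a).im * (b l a).re)) :=
        Finset.sum_congr rfl fun a _ => by ring
      rw [h2, Finset.sum_sub_distrib, hIm k l, Finset.sum_const_zero, sub_zero]
    · obtain ⟨k, rfl⟩ := exists_odd_part c hc
      obtain ⟨l, rfl⟩ := exists_even_part d hd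
      rw [if_neg (by simp only [Fin.ext_iff, Fin.val_mk]; omega)]
      simp only [hW, realify_ee, realify_eo, realify_oe, realify_oo, hUapp]
      have h2 : (∑ a : Fin S, (-(b k a).im * (b l a).re + (b k a).re * (b l a).im))
          = ∑ a : Fin S, ((b k a).re * (b l a).im - (b k a).im * (b l a).re) :=
        Finset.sum_congr rfl fun a _ => by ring
      rw [h2, hIm k l]
    · obtain ⟨k, rfl⟩ := exists_odd_part c hc
      obtain ⟨l, rfl⟩ := exists_odd_part d hd
      simp only [hW, realify_eo, realify_oo]
      rw [if_congr (show ((⟨2 * k.val + 1, by have := k.isLt; omega⟩ : Fin (2 * S))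
          = ⟨2 * l.val + 1, by have := l.isLt; omega⟩) ↔ k = l by
          simp only [Fin.ext_iff, Fin.val_mk]; omega) rfl rfl]
      simp only [hUapp]
      have h2 : (∑ a : Fin S, (-(b k a).im * -(b l a).im + (b k a).re * (b l a).re))
          = ∑ a : Fin S, ((b k a).re * (b l a).re + (b k a).im * (b l a).im) :=
        Finset.sum_congr rfl fun a _ => by ring
      rw [h2]
      exact hRe k l
  -- action of Omega on W, row-wise
  have hOW1 : ∀ (a : Fin S) (d : Fin (2 * S)),
      (Omega S * W) ⟨2 * a.val, even_lt a⟩ d = W ⟨2 * a.val + 1, odd_lt a⟩ d := by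
    intro a d
    rw [Matrix.mul_apply, sum_two_mul S (fun r => Omega S ⟨2 * a.val, even_lt a⟩ r * W r d)]
    simp only [Omega_ee, Omega_eo, zero_mul, ite_mul, one_mul, zero_add]
    rw [Finset.sum_ite_eq]
    simp
  have hOW2 : ∀ (a : Fin S) (d : Fin (2 * S)),
      (Omega S * W) ⟨2 * a.val + 1, odd_lt a⟩ d = -W ⟨2 * a.val, even_lt a⟩ d := by
    intro a d
    rw [Matrix.mul_apply, sum_two_mul S (fun r => Omega S ⟨2 * a.val + 1, odd_lt a⟩ r * W r d)]
    simp only [Omega_oe, Omega_oo, zero_mul, ite_mul, neg_one_mul, add_zero]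
    rw [Finset.sum_ite_eq]
    simp
  -- symplecticity of W
  have hWS : Wᵀ * Omega S * W = Omega S := by
    rw [Matrix.mul_assoc]
    ext c d
    rw [Matrix.mul_apply]
    simp only [Matrix.transpose_apply]
    rw [sum_two_mul S (fun r => W r c * (Omega S * W) r d)]
    rcases Nat.mod_two_eq_zero_or_one c.val with hc | hc <;>
      rcases Nat.mod_two_eq_zero_or_one d.val with hd | hd
    · obtain ⟨k, rfl⟩ := exists_even_part c hc
      obtain ⟨l, rfl⟩ := exists_even_part d hd
      rw [Omega_ee]
      simp only [hOW1, hOW2]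
      simp only [hW, realify_ee, realify_oe, hUapp]
      have h2 : (∑ a : Fin S, ((b k a).re * (b l a).im + (b k a).im * -(b l a).re))
          = ∑ a : Fin S, ((b k a).re * (b l a).im - (b k a).im * (b l a).re) :=
        Finset.sum_congr rfl fun a _ => by ring
      rw [h2, hIm k l]
    · obtain ⟨k, rfl⟩ := exists_even_part c hc
      obtain ⟨l, rfl⟩ := exists_odd_part d hd
      rw [Omega_eo]
      simp only [hOW1, hOW2]
      simp only [hW, realify_ee, realify_eo, realify_oe, realify_oo, hUapp]
      have h2 : (∑ a : Fin S, ((b k a).re * (b l a).re + (b k a).im * - -(b l a).im))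
          = ∑ a : Fin S, ((b k a).re * (b l a).re + (b k a).im * (b l a).im) :=
        Finset.sum_congr rfl fun a _ => by ring
      rw [h2]
      exact hRe k l
    · obtain ⟨k, rfl⟩ := exists_odd_part c hc
      obtain ⟨l, rfl⟩ := exists_even_part d hd
      rw [Omega_oe]
      simp only [hOW1, hOW2]
      simp only [hW, realify_ee, realify_eo, realify_oe, realify_oo, hUapp]
      have h2 : (∑ a : Fin S, (-(b k a).im * (b l a).im + (b k a).re * -(b l a).re))
          = ∑ a : Fin S, (0 - ((b k a).re * (b l a).re + (b k a).im * (b l a).im)) :=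
        Finset.sum_congr rfl fun a _ => by ring
      rw [h2, Finset.sum_sub_distrib, hRe k l, Finset.sum_const_zero, zero_sub]
      split <;> simp
    · obtain ⟨k, rfl⟩ := exists_odd_part c hc
      obtain ⟨l, rfl⟩ := exists_odd_part d hd
      rw [Omega_oo]
      simp only [hOW1, hOW2]
      simp only [hW, realify_eo, realify_oo, hUapp]
      have h2 : (∑ a : Fin S, (-(b k a).im * (b l a).re + (b k a).re * - -(b l a).im))
          = ∑ a : Fin S, ((b k a).re * (b l a).im - (b k a).im * (b l a).re) :=
        Finset.sum_congr rfl fun a _ => by ring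
      rw [h2, hIm k l]
  refine ⟨W, ⟨hWO, hWS⟩, fun m => ?_⟩
  -- expand the orthogonality relation of `v` against `cv m`
  have horth := hvorth m
  rw [PiLp.inner_apply] at horth
  have hterm : ∀ a : Fin S, (inner ℂ (cv m a) (v a) : ℂ)
      = ((O (j m) ⟨2 * a.val, by have := a.isLt; omega⟩ : ℂ) -
          (O (j m) ⟨2 * a.val + 1, by have := a.isLt; omega⟩ : ℂ) * Complex.I) * v a := by
    intro a
    rw [RCLike.inner_apply, mul_comm (v a)]
    congr 1
    simp [hcv, map_add, _root_.map_mul, Complex.conj_I]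
    ring
  rw [Finset.sum_congr rfl (fun a _ => hterm a)] at horth
  have hre := congrArg Complex.re horth
  have him := congrArg Complex.im horth
  rw [Complex.re_sum] at hre
  rw [Complex.im_sum] at him
  simp only [Complex.mul_re, Complex.mul_im, Complex.sub_re, Complex.sub_im, Complex.mul_im,
    Complex.ofReal_re, Complex.ofReal_im, Complex.I_re, Complex.I_im, Complex.zero_re,
    Complex.zero_im] at hre him
  constructor
  · rw [Matrix.mul_apply,
      sum_two_mul S (fun r => O (j m) r * W r ⟨2 * i.val, by have := i.isLt; omega⟩)]
    simp only [hW, realify_ee, realify_oe, hUapp, hbi]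
    have h2 : (∑ a : Fin S, (O (j m) ⟨2 * a.val, by have := a.isLt; omega⟩ * (v a).re
          + O (j m) ⟨2 * a.val + 1, by have := a.isLt; omega⟩ * (v a).im)) = 0 := by
      rw [← hre]
      refine Finset.sum_congr rfl fun a _ => ?_
      ring
    exact h2
  · rw [Matrix.mul_apply,
      sum_two_mul S (fun r => O (j m) r * W r ⟨2 * i.val + 1, by have := i.isLt; omega⟩)]
    simp only [hW, realify_eo, realify_oo, hUapp, hbi]
    have h2 : (∑ a : Fin S, (O (j m) ⟨2 * a.val, by have := a.isLt; omega⟩ * -(v a).im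
          + O (j m) ⟨2 * a.val + 1, by have := a.isLt; omega⟩ * (v a).re)) = 0 := by
      rw [← neg_eq_zero, ← him, ← Finset.sum_neg_distrib]
      refine Finset.sum_congr rfl fun a _ => ?_
      ring
    exact h2
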